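/- Let divisors G, G', D, D' on C satisfy deg G = 2·deg D, deg G' = 2·deg D', min(½·deg G, ½·deg G') ≥ 2g and max(½·deg G, ½·deg G') ≥ 2g + 1. Put n = ½·deg G − g + 1, n' = ½·deg G' − g + 1, and n'' = n + n' + g − 1. Fix a G-form X representing D and a G'-form X' representing D'. Then for any nn' × nn' permutation matrices P and Q such that in the block decomposition P(X ∘ X')Q = [[a, b], [c, d]] with d of size n'' × n'' the block d is k-general, the block d is a (G + G')-form representing D + D'. -/

import Mathlib

/-- All 2×2 minors of a matrix vanish, i.e. the matrix has rank at most 1. -/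
def MinorsVanish {R : Type} [CommRing R] {m n : Type} (M : Matrix m n R) : Prop :=
  ∀ i i' j j', M i j * M i' j' = M i j' * M i' j

/-- A matrix is `k`-general if some row and some column each consist of
`k`-linearly independent entries. -/
def KGeneral (k : Type) [Field k] {V : Type} [AddCommMonoid V] [Module k V]
    {m n : Type} (M : Matrix m n V) : Prop :=
  (∃ i, LinearIndependent k fun j => M i j) ∧ ∃ j, LinearIndependent k fun i => M i j

/-- Two matrices over a `k`-algebra are `k`-equivalent if `Y = Φ X Ψ` for some
invertible square matrices `Φ`, `Ψ` with entries in `k`. -/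
def KEquivalent (k : Type) [Field k] {A : Type} [CommRing A] [Algebra k A]
    {m n : Type} [Fintype m] [Fintype n] [DecidableEq m] [DecidableEq n]
    (X Y : Matrix m n A) : Prop :=
  ∃ (Φ : Matrix m m k) (Ψ : Matrix n n k), IsUnit Φ.det ∧ IsUnit Ψ.det ∧
    Y = Φ.map (algebraMap k A) * X * Ψ.map (algebraMap k A)

/-- An abstraction of a nonsingular projective curve `C` of genus `g` over an
algebraically closed field `k`, packaged together with its function field `F = k(C)`,
the divisor `div f` of a nonzero rational function (divisors are finitely supported
`ℤ`-valued functions on the points of `C`), the Riemann–Roch spaces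
`L(D) = {f : f = 0 ∨ div f + D ≥ 0}`, the rings `R_E` of functions regular near the
support of a divisor and the ideals `I_E` of functions vanishing to order at least `E`,
subject to the standard facts about them (including the Riemann–Roch theorem). -/
structure AbstractCurve (k : Type) [Field k] : Type 1 where
  /-- the points of the curve -/
  Point : Type
  /-- the function field `k(C)` -/
  F : Type
  [fieldF : Field F]
  [algF : Algebra k F]
  /-- the genus of the curve -/
  genus : ℕ
  /-- `divOf f` is the divisor of zeros and poles of `f` (junk value `0` at `f = 0`);
  its value at a point `p` is the order of vanishing of `f` at `p`. -/
  divOf : F → (Point →₀ ℤ)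
  divOf_mul : ∀ f g : F, f ≠ 0 → g ≠ 0 → divOf (f * g) = divOf f + divOf g
  divOf_algebraMap : ∀ c : k, c ≠ 0 → divOf (algebraMap k F c) = 0
  divOf_eq_zero_iff : ∀ f : F, f ≠ 0 →
    (divOf f = 0 ↔ ∃ c : k, c ≠ 0 ∧ f = algebraMap k F c)
  /-- a principal divisor has degree zero -/
  deg_divOf : ∀ f : F, f ≠ 0 → (divOf f).sum (fun _ n => n) = 0
  /-- the Riemann–Roch space `L(D)` as a `k`-subspace of the function field -/
  RR : (Point →₀ ℤ) → Submodule k F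
  mem_RR : ∀ (D : Point →₀ ℤ) (f : F), f ∈ RR D ↔ f = 0 ∨ 0 ≤ divOf f + D
  finite_RR : ∀ D : Point →₀ ℤ, Module.Finite k (RR D)
  /-- the Riemann–Roch theorem: `ℓ(D) = deg D - g + 1` whenever `deg D > 2g - 2` -/
  rank_RR : ∀ D : Point →₀ ℤ, 2 * (genus : ℤ) - 2 < D.sum (fun _ n => n) →
    (Module.finrank k (RR D) : ℤ) = D.sum (fun _ n => n) - genus + 1
  /-- the `k`-space `R_E` of functions regular in a neighborhood of the support of `E` -/
  Reg : (Point →₀ ℤ) → Submodule k F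
  mem_Reg : ∀ (E : Point →₀ ℤ) (f : F),
    f ∈ Reg E ↔ f = 0 ∨ ∀ p ∈ E.support, 0 ≤ divOf f p
  /-- the `k`-space `I_E ⊆ R_E` of functions vanishing to order at least `E` -/
  VanishIdeal : (Point →₀ ℤ) → Submodule k F
  mem_VanishIdeal : ∀ (E : Point →₀ ℤ) (f : F),
    f ∈ VanishIdeal E ↔ f = 0 ∨ ∀ p ∈ E.support, E p ≤ divOf f p

namespace AbstractCurve

attribute [instance] fieldF algF

variable {k : Type} [Field k]

/-- The degree of a divisor. -/
def deg (C : AbstractCurve k) (D : C.Point →₀ ℤ) : ℤ := D.sum fun _ n => n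

/-- Linear equivalence of divisors: `D ~ D'` iff `D' = D + div f` for some `f ≠ 0`. -/
def LinEquiv (C : AbstractCurve k) (D D' : C.Point →₀ ℤ) : Prop :=
  ∃ f : C.F, f ≠ 0 ∧ D' = D + C.divOf f

/-- A `G`-form: a square matrix with entries in `L(G)`, all of whose 2×2 minors vanish,
and which is `k`-general.  (In context its size is `n = ½ deg G - g + 1`.) -/
def IsGForm (C : AbstractCurve k) (G : C.Point →₀ ℤ) {n : ℕ}
    (X : Matrix (Fin n) (Fin n) C.F) : Prop :=
  (∀ i j, X i j ∈ C.RR G) ∧ MinorsVanish X ∧ KGeneral k X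

/-- The `G`-form `X` represents the divisor `D` (of degree `½ deg G`): `X = u v` where
the entries of the column vector `u` form a `k`-basis of `L(D)` and the entries of the
row vector `v` form a `k`-basis of `L(G - D)`. -/
def Represents (C : AbstractCurve k) (G D : C.Point →₀ ℤ) {n : ℕ}
    (X : Matrix (Fin n) (Fin n) C.F) : Prop :=
  ∃ u v : Fin n → C.F,
    LinearIndependent k u ∧ Submodule.span k (Set.range u) = C.RR D ∧
    LinearIndependent k v ∧ Submodule.span k (Set.range v) = C.RR (G - D) ∧
    ∀ i j, X i j = u i * v j

/-- An `E`-compression functional `ρ : L(G) → k` (realized as a `k`-linear functional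
on the function field): `ρ` kills `L(G - E)`, and for every divisor `D` of degree
`½ deg G` the induced pairing `(a, b) ↦ ρ(ab)` on
`L(D)/L(D-E) × L(G-D)/L(G-D-E)` is a perfect pairing of `(deg E)`-dimensional
`k`-vector spaces (expressed by nondegeneracy on both sides together with both
quotients having dimension `deg E`). -/
def IsCompression (C : AbstractCurve k) (G E : C.Point →₀ ℤ) (ρ : C.F →ₗ[k] k) : Prop :=
  (∀ f ∈ C.RR (G - E), ρ f = 0) ∧
  ∀ D : C.Point →₀ ℤ, 2 * C.deg D = C.deg G →
    (∀ a ∈ C.RR D, (∀ b ∈ C.RR (G - D), ρ (a * b) = 0) → a ∈ C.RR (D - E)) ∧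
    (∀ b ∈ C.RR (G - D), (∀ a ∈ C.RR D, ρ (a * b) = 0) → b ∈ C.RR (G - D - E)) ∧
    (Module.finrank k
      (C.RR D ⧸ Submodule.comap (C.RR D).subtype (C.RR (D - E))) : ℤ) = C.deg E ∧
    (Module.finrank k
      (C.RR (G - D) ⧸
        Submodule.comap (C.RR (G - D)).subtype (C.RR (G - D - E))) : ℤ) = C.deg E

end AbstractCurve
/-- The lower-right `q × q` block of an `N × N` matrix, `N = m + q`. -/
def lowerRightBlock {R : Type} {N m q : ℕ} (h : N = m + q)
    (M : Matrix (Fin N) (Fin N) R) : Matrix (Fin q) (Fin q) R :=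
  M.submatrix (fun i => (finCongr h.symm) (finSumFinEquiv (Sum.inr i)))
    (fun j => (finCongr h.symm) (finSumFinEquiv (Sum.inr j)))
section Aux

variable {k : Type} [Field k]

lemma AbstractCurve.mul_mem_RR (C : AbstractCurve k) {A B : C.Point →₀ ℤ} {f g : C.F}
    (hf : f ∈ C.RR A) (hg : g ∈ C.RR B) : f * g ∈ C.RR (A + B) := by
  rw [C.mem_RR] at hf hg ⊢
  by_cases hf0 : f = 0
  · left; simp [hf0]
  by_cases hg0 : g = 0
  · left; simp [hg0]
  rcases hf with rfl | hf; · exact absurd rfl hf0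
  rcases hg with rfl | hg; · exact absurd rfl hg0
  right
  rw [C.divOf_mul f g hf0 hg0]
  have h := add_nonneg hf hg
  rw [add_add_add_comm]
  exact h

lemma AbstractCurve.deg_add' (C : AbstractCurve k) (A B : C.Point →₀ ℤ) :
    C.deg (A + B) = C.deg A + C.deg B :=
  Finsupp.sum_add_index' (fun _ => rfl) (fun _ _ _ => rfl)

lemma AbstractCurve.deg_sub' (C : AbstractCurve k) (A B : C.Point →₀ ℤ) :
    C.deg (A - B) = C.deg A - C.deg B :=
  Finsupp.sum_sub_index (fun _ _ _ => rfl)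

lemma span_eq_of_li_of_finrank {F : Type} [AddCommGroup F] [Module k F]
    {n : ℕ} (hn : 0 < n) (W : Submodule k F) (hfin : Module.Finite k W)
    (hrank : Module.finrank k W = n)
    (w : Fin n → F) (hmem : ∀ i, w i ∈ W) (hli : LinearIndependent k w) :
    Submodule.span k (Set.range w) = W := by
  set w₀ : Fin n → W := fun i => ⟨w i, hmem i⟩ with hw₀
  have hcomp : w = W.subtype ∘ w₀ := rfl
  have hli₀ : LinearIndependent k w₀ := by
    apply LinearIndependent.of_comp W.subtype
    rw [← hcomp]; exact hli
  haveI : Nonempty (Fin n) := ⟨⟨0, hn⟩⟩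
  have htop : Submodule.span k (Set.range w₀) = ⊤ := by
    apply hli₀.span_eq_top_of_card_eq_finrank
    simp [hrank]
  calc Submodule.span k (Set.range w)
      = Submodule.span k (W.subtype '' Set.range w₀) := by
        rw [hcomp, Set.range_comp]
    _ = Submodule.map W.subtype (Submodule.span k (Set.range w₀)) := by
        rw [Submodule.map_span]
    _ = W := by rw [htop, Submodule.map_top, Submodule.range_subtype]

end Aux

open AbstractCurve in
/-- In the situation of the Kronecker-product construction
(`deg G = 2 deg D`, `deg G' = 2 deg D'`, `min(½ deg G, ½ deg G') ≥ 2g`,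
`max(½ deg G, ½ deg G') ≥ 2g + 1`, `n = ½ deg G - g + 1`, `n' = ½ deg G' - g + 1`,
`n'' = n + n' + g - 1`, `X` a `G`-form representing `D`, `X'` a `G'`-form representing
`D'`), for **any** permutation matrices `P`, `Q` such that the lower-right `n'' × n''`
block `d` of `P (X ∘ X') Q` is `k`-general, the block `d` is a `(G + G')`-form
representing `D + D'`. -/
theorem kronecker_block_gform (k : Type) [Field k] [IsAlgClosed k]
    (C : AbstractCurve k) (G G' D D' : C.Point →₀ ℤ)
    (hGD : C.deg G = 2 * C.deg D) (hGD' : C.deg G' = 2 * C.deg D')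
    (hmin : 2 * (C.genus : ℤ) ≤ min (C.deg D) (C.deg D'))
    (hmax : 2 * (C.genus : ℤ) + 1 ≤ max (C.deg D) (C.deg D'))
    (n n' n'' : ℕ)
    (hn : (n : ℤ) = C.deg D - C.genus + 1) (hn' : (n' : ℤ) = C.deg D' - C.genus + 1)
    (hn'' : (n'' : ℤ) = (n : ℤ) + (n' : ℤ) + C.genus - 1)
    (X : Matrix (Fin n) (Fin n) C.F) (hX : C.IsGForm G X) (hXD : C.Represents G D X)
    (X' : Matrix (Fin n') (Fin n') C.F) (hX' : C.IsGForm G' X')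
    (hXD' : C.Represents G' D' X')
    (m : ℕ) (hm : n * n' = m + n'')
    (σ τ : Equiv.Perm (Fin (n * n')))
    (hgen : KGeneral k (lowerRightBlock hm
      ((Matrix.reindex finProdFinEquiv finProdFinEquiv
        (Matrix.kroneckerMap (· * ·) X X')).submatrix σ τ))) :
    C.IsGForm (G + G') (lowerRightBlock hm
      ((Matrix.reindex finProdFinEquiv finProdFinEquiv
        (Matrix.kroneckerMap (· * ·) X X')).submatrix σ τ)) ∧
    C.Represents (G + G') (D + D') (lowerRightBlock hm
      ((Matrix.reindex finProdFinEquiv finProdFinEquiv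
        (Matrix.kroneckerMap (· * ·) X X')).submatrix σ τ)) := by
  obtain ⟨u, v, hu_li, hu_span, hv_li, hv_span, hXuv⟩ := hXD
  obtain ⟨u', v', hu'_li, hu'_span, hv'_li, hv'_span, hX'uv⟩ := hXD'
  set d := lowerRightBlock hm
      ((Matrix.reindex finProdFinEquiv finProdFinEquiv
        (Matrix.kroneckerMap (· * ·) X X')).submatrix σ τ) with hd
  -- index maps
  set e : Fin n'' → Fin (n * n') :=
    fun i => (finCongr hm.symm) (finSumFinEquiv (Sum.inr i)) with he
  set p : Fin n'' → Fin n × Fin n' := fun i => finProdFinEquiv.symm (σ (e i)) with hp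
  set q : Fin n'' → Fin n × Fin n' := fun j => finProdFinEquiv.symm (τ (e j)) with hq
  set U : Fin n'' → C.F := fun i => u (p i).1 * u' (p i).2 with hU
  set V : Fin n'' → C.F := fun j => v (q j).1 * v' (q j).2 with hV
  have hdUV : ∀ i j, d i j = U i * V j := by
    intro i j
    have : d i j = X (p i).1 (q j).1 * X' (p i).2 (q j).2 := rfl
    rw [this, hXuv, hX'uv, hU, hV]
    ring
  -- memberships
  have hu_mem : ∀ a, u a ∈ C.RR D := by
    intro a
    rw [← hu_span]
    exact Submodule.subset_span ⟨a, rfl⟩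
  have hv_mem : ∀ b, v b ∈ C.RR (G - D) := by
    intro b
    rw [← hv_span]
    exact Submodule.subset_span ⟨b, rfl⟩
  have hu'_mem : ∀ a, u' a ∈ C.RR D' := by
    intro a
    rw [← hu'_span]
    exact Submodule.subset_span ⟨a, rfl⟩
  have hv'_mem : ∀ b, v' b ∈ C.RR (G' - D') := by
    intro b
    rw [← hv'_span]
    exact Submodule.subset_span ⟨b, rfl⟩
  have hU_mem : ∀ i, U i ∈ C.RR (D + D') := fun i =>
    C.mul_mem_RR (hu_mem _) (hu'_mem _)
  have hV_mem : ∀ j, V j ∈ C.RR (G + G' - (D + D')) := by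
    intro j
    have h := C.mul_mem_RR (hv_mem (q j).1) (hv'_mem (q j).2)
    have hdiv : G - D + (G' - D') = G + G' - (D + D') := by abel
    rwa [hdiv] at h
  -- linear independence of U and V from k-generality
  obtain ⟨⟨i₀, hrow⟩, ⟨j₀, hcol⟩⟩ := hgen
  have hV_li : LinearIndependent k V := by
    apply LinearIndependent.of_comp (LinearMap.mulLeft k (U i₀))
    have : ((LinearMap.mulLeft k (U i₀) : C.F →ₗ[k] C.F) ∘ V) = fun j => d i₀ j := by
      funext j; simp [LinearMap.mulLeft_apply, hdUV]
    rw [this]; exact hrow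
  have hU_li : LinearIndependent k U := by
    apply LinearIndependent.of_comp (LinearMap.mulRight k (V j₀))
    have : ((LinearMap.mulRight k (V j₀) : C.F →ₗ[k] C.F) ∘ U) = fun i => d i j₀ := by
      funext i; simp [LinearMap.mulRight_apply, hdUV]
    rw [this]; exact hcol
  -- degree computations
  have hg0 : (0 : ℤ) ≤ 2 * (C.genus : ℤ) := by positivity
  have hDmin : 2 * (C.genus : ℤ) ≤ C.deg D := le_trans hmin (min_le_left _ _)
  have hD'min : 2 * (C.genus : ℤ) ≤ C.deg D' := le_trans hmin (min_le_right _ _)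
  have hdegDD' : C.deg (D + D') = C.deg D + C.deg D' := C.deg_add' _ _
  have hdegRest : C.deg (G + G' - (D + D')) = C.deg D + C.deg D' := by
    rw [C.deg_sub', C.deg_add', C.deg_add', hGD, hGD']; ring
  have hn''eq : (n'' : ℤ) = C.deg D + C.deg D' - C.genus + 1 := by
    rw [hn'', hn, hn']; ring
  -- finranks
  have hrank1 : Module.finrank k (C.RR (D + D')) = n'' := by
    have h := C.rank_RR (D + D') (by rw [show (D + D').sum (fun _ n => n) = C.deg (D + D') from rfl, hdegDD']; linarith)
    have : (Module.finrank k (C.RR (D + D')) : ℤ) = (n'' : ℤ) := by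
      rw [h, hn''eq]
      show C.deg (D + D') - C.genus + 1 = _
      rw [hdegDD']
    exact_mod_cast this
  have hrank2 : Module.finrank k (C.RR (G + G' - (D + D'))) = n'' := by
    have h := C.rank_RR (G + G' - (D + D')) (by
      rw [show (G + G' - (D + D')).sum (fun _ n => n) = C.deg (G + G' - (D + D')) from rfl, hdegRest]; linarith)
    have : (Module.finrank k (C.RR (G + G' - (D + D'))) : ℤ) = (n'' : ℤ) := by
      rw [h, hn''eq]
      show C.deg (G + G' - (D + D')) - C.genus + 1 = _
      rw [hdegRest]
    exact_mod_cast this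
  -- n'' positive
  have hn''pos : 0 < n'' := by
    have : (0:ℤ) < (n'' : ℤ) := by rw [hn''eq]; linarith
    exact_mod_cast this
  -- spans
  have hU_span : Submodule.span k (Set.range U) = C.RR (D + D') :=
    span_eq_of_li_of_finrank hn''pos _ (C.finite_RR _) hrank1 U hU_mem hU_li
  have hV_span : Submodule.span k (Set.range V) = C.RR (G + G' - (D + D')) :=
    span_eq_of_li_of_finrank hn''pos _ (C.finite_RR _) hrank2 V hV_mem hV_li
  constructor
  · refine ⟨?_, ?_, ⟨i₀, hrow⟩, ⟨j₀, hcol⟩⟩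
    · intro i j
      rw [hdUV]
      have h := C.mul_mem_RR (hU_mem i) (hV_mem j)
      have hdiv : D + D' + (G + G' - (D + D')) = G + G' := by abel
      rwa [hdiv] at h
    · intro i i' j j'
      rw [hdUV, hdUV, hdUV, hdUV]; ring
  · exact ⟨U, V, hU_li, hU_span, hV_li, hV_span, hdUV⟩
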